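/- arXiv:2112.00253 — 5 statements merged into one kernel-verified Lean document; each statement's English description precedes it below -/
import Mathlib

section
/- Let γ > 0 be a real number. For every pair of real numbers R ≥ 0 and Q ≥ 0 with R + Q > 0, there exists a unique real number Z with Z ≥ R and Z > 0 satisfying (1 − R/Z) · Z^γ = Q, equivalently Z^γ − R · Z^{γ−1} = Q. -/
private lemma two_fluid_mono (γ : ℝ) (hγ : 0 < γ) (R : ℝ) (hR : 0 ≤ R)
    {a b : ℝ} (ha : 0 < a) (hRa : R ≤ a) (hab : a < b) :
    (1 - R / a) * a ^ γ < (1 - R / b) * b ^ γ := by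
  have hb : 0 < b := ha.trans hab
  have h1 : (0:ℝ) ≤ 1 - R / a := by
    rw [sub_nonneg]
    exact (div_le_one ha).mpr hRa
  have h2 : a ^ γ < b ^ γ := Real.rpow_lt_rpow ha.le hab hγ
  rcases eq_or_lt_of_le hR with hR0 | hRpos
  · simp [← hR0, h2]
  · have h3 : R / b < R / a := div_lt_div_of_pos_left hRpos ha hab
    calc (1 - R / a) * a ^ γ ≤ (1 - R / a) * b ^ γ :=
          mul_le_mul_of_nonneg_left h2.le h1
      _ < (1 - R / b) * b ^ γ :=
          mul_lt_mul_of_pos_right (by linarith) (Real.rpow_pos_of_pos hb γ)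

/-- Existence and uniqueness of the algebraic pressure variable `Z`: for `γ > 0`
and densities `R ≥ 0`, `Q ≥ 0` with `R + Q > 0`, there is a unique `Z ≥ R`,
`Z > 0` with `(1 − R/Z) Z^γ = Q`, i.e. `Z^γ − R Z^{γ−1} = Q`. -/
theorem two_fluid_pressure_exists_unique
    (γ : ℝ) (hγ : 0 < γ)
    (R Q : ℝ) (hR : 0 ≤ R) (hQ : 0 ≤ Q) (hRQ : 0 < R + Q) :
    ∃! Z : ℝ, R ≤ Z ∧ 0 < Z ∧ (1 - R / Z) * Z ^ γ = Q := by
  have key : ∃ Z : ℝ, R ≤ Z ∧ 0 < Z ∧ (1 - R / Z) * Z ^ γ = Q := by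
    rcases eq_or_lt_of_le hR with hR0 | hRpos
    · -- R = 0
      have hQpos : 0 < Q := by linarith
      refine ⟨Q ^ (1/γ), ?_, Real.rpow_pos_of_pos hQpos _, ?_⟩
      · exact le_of_lt (by rw [← hR0]; exact Real.rpow_pos_of_pos hQpos _)
      · rw [← hR0]
        rw [← Real.rpow_mul hQ, one_div, inv_mul_cancel₀ hγ.ne', Real.rpow_one]
        ring
    · -- R > 0 : IVT on [R, M]
      set f : ℝ → ℝ := fun Z => (1 - R / Z) * Z ^ γ with hf
      set M : ℝ := max (max (2*R) 1) ((2*Q+1) ^ (1/γ)) with hM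
      have hM1 : (1:ℝ) ≤ M := le_trans (le_max_right _ _) (le_max_left _ _)
      have hMpos : 0 < M := lt_of_lt_of_le one_pos hM1
      have hM2R : 2*R ≤ M := le_trans (le_max_left _ _) (le_max_left _ _)
      have hRM : R ≤ M := by linarith
      have hMQ : 2*Q + 1 ≤ M ^ γ := by
        have h1 : (2*Q+1) ^ (1/γ) ≤ M := le_max_right _ _
        have h2 : ((2*Q+1) ^ (1/γ)) ^ γ ≤ M ^ γ :=
          Real.rpow_le_rpow (Real.rpow_nonneg (by linarith) _) h1 hγ.le
        rwa [← Real.rpow_mul (by linarith : (0:ℝ) ≤ 2*Q+1), one_div,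
          inv_mul_cancel₀ hγ.ne', Real.rpow_one] at h2
      have hfM : Q ≤ f M := by
        have hhalf : (1:ℝ)/2 ≤ 1 - R / M := by
          have : R / M ≤ 1/2 := by
            rw [div_le_div_iff₀ hMpos two_pos]
            linarith
          linarith
        have : (1/2 : ℝ) * (2*Q+1) ≤ (1 - R/M) * M ^ γ :=
          mul_le_mul hhalf hMQ (by linarith) (by linarith)
        simp only [hf]
        linarith
      have hfR : f R = 0 := by
        simp [hf, div_self hRpos.ne']
      have hcont : ContinuousOn f (Set.Icc R M) := by
        apply ContinuousOn.mul
        · apply continuousOn_const.sub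
          exact continuousOn_const.div continuousOn_id
            (fun z hz => ne_of_gt (lt_of_lt_of_le hRpos hz.1))
        · exact continuousOn_id.rpow_const (fun z hz => Or.inr hγ.le)
      have := intermediate_value_Icc hRM hcont
      have hQmem : Q ∈ Set.Icc (f R) (f M) := by rw [hfR]; exact ⟨hQ, hfM⟩
      obtain ⟨Z, hZmem, hZeq⟩ := this hQmem
      exact ⟨Z, hZmem.1, lt_of_lt_of_le hRpos hZmem.1, hZeq⟩
  obtain ⟨Z, hZR, hZpos, hZeq⟩ := key
  refine ⟨Z, ⟨hZR, hZpos, hZeq⟩, ?_⟩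
  rintro y ⟨hyR, hypos, hyeq⟩
  by_contra hne
  rcases lt_or_gt_of_ne hne with h | h
  · have := two_fluid_mono γ hγ R hR hypos hyR h
    rw [hyeq, hZeq] at this; exact lt_irrefl _ this
  · have := two_fluid_mono γ hγ R hR hZpos hZR h
    rw [hyeq, hZeq] at this; exact lt_irrefl _ this
end

section
/- Let γ > 0 and let R ≥ 0, Q ≥ 0 with R + Q > 0. If Z > 0 is the unique number with Z ≥ R and (1 − R/Z) · Z^γ = Q, then max{ R, Q^{1/γ} } ≤ Z ≤ max{ 2R, (2Q)^{1/γ} }. -/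
/-- Bounds on the algebraic pressure variable: if `Z ≥ R`, `Z > 0` satisfies
`(1 − R/Z) Z^γ = Q` with `R, Q ≥ 0`, `R + Q > 0`, then
`max{R, Q^{1/γ}} ≤ Z ≤ max{2R, (2Q)^{1/γ}}`. -/
theorem two_fluid_pressure_bounds
    (γ : ℝ) (hγ : 0 < γ)
    (R Q Z : ℝ) (hR : 0 ≤ R) (hQ : 0 ≤ Q) (hRQ : 0 < R + Q)
    (hZR : R ≤ Z) (hZ : 0 < Z) (hZeq : (1 - R / Z) * Z ^ γ = Q) :
    max R (Q ^ (1 / γ)) ≤ Z ∧ Z ≤ max (2 * R) ((2 * Q) ^ (1 / γ)) := by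
  have hZγ : (0:ℝ) < Z ^ γ := Real.rpow_pos_of_pos hZ γ
  have key : ∀ q : ℝ, 0 ≤ q → q ≤ Z ^ γ → q ^ (1 / γ) ≤ Z := by
    intro q hq hle
    have := Real.rpow_le_rpow hq hle (le_of_lt (by positivity : (0:ℝ) < 1 / γ))
    rwa [← Real.rpow_mul hZ.le, mul_one_div_cancel hγ.ne', Real.rpow_one] at this
  constructor
  · refine max_le hZR (key Q hQ ?_)
    rw [← hZeq]
    have h1 : 1 - R / Z ≤ 1 := by
      have : 0 ≤ R / Z := div_nonneg hR hZ.le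
      linarith
    nlinarith
  · rcases le_or_gt Z (2 * R) with h | h
    · exact le_max_of_le_left h
    · refine le_max_of_le_right ?_
      have hRZ : R / Z < 1 / 2 := by
        rw [div_lt_div_iff₀ hZ (by norm_num)]
        linarith
      have hhalf : Z ^ γ ≤ 2 * Q := by
        rw [← hZeq]; nlinarith
      have := key (Z ^ γ) hZγ.le le_rfl
      calc Z = (Z ^ γ) ^ (1 / γ) := by
              rw [← Real.rpow_mul hZ.le, mul_one_div_cancel hγ.ne', Real.rpow_one]
        _ ≤ (2 * Q) ^ (1 / γ) :=
              Real.rpow_le_rpow hZγ.le hhalf (by positivity)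
end

section
/- Let γ₊ and γ₋ be real numbers with 1 ≤ γ₊ ≤ γ₋, set γ = γ₊/γ₋, and let M > 0. There exists a constant C = C(M, γ₊, γ₋) > 0 such that for all pairs (R,Q) and (R̃,Q̃) in [0,M] × [0,M] with R + Q > 0 and R̃ + Q̃ > 0, one has | Z(R,Q)^{γ₊} − Z(R̃,Q̃)^{γ₊} | ≤ C ( |R − R̃| + |Q − Q̃| ). -/
open Real

/-- From the defining equation, `Z = R + Q * Z ^ (1-γ)`. -/
lemma two_fluid_key_eq {γ R Q Z : ℝ} (hZ : 0 < Z)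
    (heq : (1 - R / Z) * Z ^ γ = Q) : Z = R + Q * Z ^ (1 - γ) := by
  have h1 : Z ^ γ * Z ^ (1 - γ) = Z := by
    rw [← Real.rpow_add hZ]
    simp
  have h2 : Q * Z ^ (1 - γ) = (1 - R / Z) * (Z ^ γ * Z ^ (1 - γ)) := by
    rw [← heq]; ring
  rw [h1] at h2
  field_simp at h2
  linarith

/-- `Q ≤ Z ^ γ`. -/
lemma two_fluid_Q_le {γ R Q Z : ℝ} (hZ : 0 < Z) (hR : 0 ≤ R)
    (heq : (1 - R / Z) * Z ^ γ = Q) : Q ≤ Z ^ γ := by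
  have h1 : 0 ≤ R / Z := div_nonneg hR hZ.le
  have h2 : (0:ℝ) ≤ Z ^ γ := (Real.rpow_pos_of_pos hZ γ).le
  nlinarith

/-- Upper bound on `Z`. -/
lemma two_fluid_Z_le {γ M R Q Z : ℝ} (hγ : 0 < γ) (hγ1 : γ ≤ 1)
    (hR : R ∈ Set.Icc 0 M) (hQ : Q ∈ Set.Icc 0 M)
    (hZ : 0 < Z) (heq : (1 - R / Z) * Z ^ γ = Q) :
    Z ≤ max 1 ((2 * M) ^ (1 / γ)) := by
  rcases le_total Z 1 with h | h
  · exact h.trans (le_max_left _ _)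
  · have key := two_fluid_key_eq hZ heq
    have hZg1 : Z ^ (γ - 1) ≤ 1 :=
      Real.rpow_le_one_of_one_le_of_nonpos h (by linarith)
    have hsplit : Z ^ γ = R * Z ^ (γ - 1) + Q := by
      have h1 : Z ^ (1 - γ) * Z ^ (γ - 1) = 1 := by
        rw [← Real.rpow_add hZ]
        simp
      have h2 : Z * Z ^ (γ - 1) = Z ^ γ := by
        nth_rewrite 1 [← Real.rpow_one Z]
        rw [← Real.rpow_add hZ]
        ring_nf
      calc Z ^ γ = (R + Q * Z ^ (1 - γ)) * Z ^ (γ - 1) := by rw [← key, h2]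
        _ = R * Z ^ (γ - 1) + Q * (Z ^ (1 - γ) * Z ^ (γ - 1)) := by ring
        _ = R * Z ^ (γ - 1) + Q := by rw [h1]; ring
    have hRZ : R * Z ^ (γ - 1) ≤ R := by
      have hR0 : 0 ≤ R := hR.1
      nlinarith [(Real.rpow_pos_of_pos hZ (γ - 1)).le]
    have hZγ : Z ^ γ ≤ 2 * M := by
      have := hR.2; have := hQ.2
      linarith
    have h3 : (Z ^ γ) ^ (1 / γ) ≤ (2 * M) ^ (1 / γ) :=
      Real.rpow_le_rpow (Real.rpow_pos_of_pos hZ γ).le hZγ (by positivity)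
    rw [← Real.rpow_mul hZ.le, mul_one_div_cancel hγ.ne', Real.rpow_one] at h3
    exact h3.trans (le_max_right _ _)

/-- One-sided Lipschitz estimate for `Z` itself. -/
lemma two_fluid_Z_lipschitz {γ K R Q Z R' Q' Z' : ℝ} (hγ : 0 < γ) (hγ1 : γ ≤ 1)
    (hR : 0 ≤ R) (hR' : 0 ≤ R') (hQ' : 0 ≤ Q')
    (hZ0 : 0 < Z) (heq : (1 - R / Z) * Z ^ γ = Q)
    (hZ0' : 0 < Z') (heq' : (1 - R' / Z') * Z' ^ γ = Q')
    (hle : Z' ≤ Z) (hK : Z ^ (1 - γ) ≤ K) :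
    γ * (Z - Z') ≤ |R - R'| + K * |Q - Q'| := by
  have key := two_fluid_key_eq hZ0 heq
  have key' := two_fluid_key_eq hZ0' heq'
  have hQ'le : Q' ≤ Z' ^ γ := two_fluid_Q_le hZ0' hR' heq'
  have hbern : Z' ^ γ * (Z ^ (1 - γ) - Z' ^ (1 - γ)) ≤ (1 - γ) * (Z - Z') := by
    have hs : -1 ≤ (Z - Z') / Z' := by
      have : 0 ≤ (Z - Z') / Z' := div_nonneg (by linarith) hZ0'.le
      linarith
    have hb := rpow_one_add_le_one_add_mul_self hs (p := 1 - γ) (by linarith) (by linarith)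
    have hzz : 1 + (Z - Z') / Z' = Z / Z' := by field_simp; ring
    rw [hzz, Real.div_rpow hZ0.le hZ0'.le] at hb
    have hZ'pow : (0:ℝ) < Z' ^ (1 - γ) := Real.rpow_pos_of_pos hZ0' _
    rw [div_le_iff₀ hZ'pow] at hb
    have hsplit : Z' ^ γ * Z' ^ (1 - γ) = Z' := by
      rw [← Real.rpow_add hZ0']; simp
    have hZγpos : (0:ℝ) < Z' ^ γ := Real.rpow_pos_of_pos hZ0' _
    calc Z' ^ γ * (Z ^ (1 - γ) - Z' ^ (1 - γ))
        ≤ Z' ^ γ * ((1 + (1 - γ) * ((Z - Z') / Z')) * Z' ^ (1 - γ) - Z' ^ (1 - γ)) := by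
          nlinarith
      _ = (1 - γ) * ((Z - Z') / Z') * (Z' ^ γ * Z' ^ (1 - γ)) := by ring
      _ = (1 - γ) * (Z - Z') := by rw [hsplit]; field_simp
  have hmono : Z' ^ (1 - γ) ≤ Z ^ (1 - γ) :=
    Real.rpow_le_rpow hZ0'.le hle (by linarith)
  have hQterm : Q' * (Z ^ (1 - γ) - Z' ^ (1 - γ)) ≤ (1 - γ) * (Z - Z') := by
    nlinarith
  have hdecomp : Z - Z' = (R - R') + (Q - Q') * Z ^ (1 - γ)
      + Q' * (Z ^ (1 - γ) - Z' ^ (1 - γ)) := by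
    linear_combination key - key'
  have habsR : R - R' ≤ |R - R'| := le_abs_self _
  have habsQ : (Q - Q') * Z ^ (1 - γ) ≤ |Q - Q'| * K := by
    have hpos := Real.rpow_pos_of_pos hZ0 (1 - γ)
    have h1 : (Q - Q') * Z ^ (1 - γ) ≤ |Q - Q'| * Z ^ (1 - γ) := by
      nlinarith [le_abs_self (Q - Q')]
    have h2 : |Q - Q'| * Z ^ (1 - γ) ≤ |Q - Q'| * K := by
      nlinarith [abs_nonneg (Q - Q')]
    linarith
  nlinarith

/-- One-sided Lipschitz estimate for the power `Z ^ p`, `p ≥ 1`. -/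
lemma two_fluid_pow_lipschitz {p Zm Z Z' : ℝ} (hp : 1 ≤ p)
    (hZ0 : 0 < Z) (hZ0' : 0 < Z') (hle : Z' ≤ Z) (hZm : Z ≤ Zm) :
    Z ^ p - Z' ^ p ≤ p * Zm ^ (p - 1) * (Z - Z') := by
  have hs : -1 ≤ (Z' - Z) / Z := by
    rw [neg_le, ← neg_div, div_le_one hZ0]
    linarith
  have hb := one_add_mul_self_le_rpow_one_add hs hp
  have hzz : 1 + (Z' - Z) / Z = Z' / Z := by field_simp; ring
  rw [hzz, Real.div_rpow hZ0'.le hZ0.le] at hb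
  have hZpow : (0:ℝ) < Z ^ p := Real.rpow_pos_of_pos hZ0 _
  rw [le_div_iff₀ hZpow] at hb
  have hsplit : Z ^ p / Z = Z ^ (p - 1) := by
    rw [Real.rpow_sub hZ0, Real.rpow_one]
  have hb2 : Z ^ p - Z' ^ p ≤ p * Z ^ (p - 1) * (Z - Z') := by
    have hexp : p * ((Z' - Z) / Z) * Z ^ p = p * (Z ^ p / Z) * (Z' - Z) := by
      field_simp
    rw [hsplit] at hexp
    nlinarith
  have hpow : Z ^ (p - 1) ≤ Zm ^ (p - 1) :=
    Real.rpow_le_rpow hZ0.le hZm (by linarith)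
  have hp0 : (0:ℝ) < p := lt_of_lt_of_le one_pos hp
  have := mul_le_mul_of_nonneg_right (mul_le_mul_of_nonneg_left hpow hp0.le)
    (sub_nonneg.2 hle)
  nlinarith

/-- One-sided combined estimate. -/
lemma two_fluid_main {γ γp M R Q Z R' Q' Z' : ℝ} (hγ : 0 < γ) (hγ1 : γ ≤ 1)
    (hγp : 1 ≤ γp) (hM : 0 < M)
    (hR : R ∈ Set.Icc 0 M) (hQ : Q ∈ Set.Icc 0 M)
    (hR' : R' ∈ Set.Icc 0 M) (hQ' : Q' ∈ Set.Icc 0 M)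
    (hZ0 : 0 < Z) (heq : (1 - R / Z) * Z ^ γ = Q)
    (hZ0' : 0 < Z') (heq' : (1 - R' / Z') * Z' ^ γ = Q')
    (hle : Z' ≤ Z) :
    Z ^ γp - Z' ^ γp ≤
      γp * (max 1 ((2 * M) ^ (1 / γ))) ^ (γp - 1) *
        ((max 1 ((2 * M) ^ (1 / γ))) ^ (1 - γ) / γ) * (|R - R'| + |Q - Q'|) := by
  have hZle : Z ≤ max 1 ((2 * M) ^ (1 / γ)) := two_fluid_Z_le hγ hγ1 hR hQ hZ0 heq
  have hZmax1 : (1:ℝ) ≤ max 1 ((2 * M) ^ (1 / γ)) := le_max_left _ _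
  have hZmax0 : (0:ℝ) < max 1 ((2 * M) ^ (1 / γ)) := lt_of_lt_of_le one_pos hZmax1
  set Zm : ℝ := max 1 ((2 * M) ^ (1 / γ))
  have hK1 : (1:ℝ) ≤ Zm ^ (1 - γ) := Real.one_le_rpow hZmax1 (by linarith)
  have hKs : Z ^ (1 - γ) ≤ Zm ^ (1 - γ) :=
    Real.rpow_le_rpow hZ0.le hZle (by linarith)
  have hlip := two_fluid_Z_lipschitz hγ hγ1 hR.1 hR'.1 hQ'.1 hZ0 heq hZ0' heq' hle hKs
  have hpow := two_fluid_pow_lipschitz hγp hZ0 hZ0' hle hZle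
  have hZm0 : (0:ℝ) < Zm ^ (γp - 1) := Real.rpow_pos_of_pos hZmax0 _
  have hγp0 : (0:ℝ) < γp := lt_of_lt_of_le one_pos hγp
  have hRabs : (0:ℝ) ≤ |R - R'| := abs_nonneg _
  have hQabs : (0:ℝ) ≤ |Q - Q'| := abs_nonneg _
  have hK0 : (0:ℝ) < Zm ^ (1 - γ) := lt_of_lt_of_le one_pos hK1
  have hZsub : Z - Z' ≤ Zm ^ (1 - γ) / γ * (|R - R'| + |Q - Q'|) := by
    rw [div_mul_eq_mul_div, le_div_iff₀ hγ]
    have h1 : 1 * |R - R'| ≤ Zm ^ (1 - γ) * |R - R'| :=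
      mul_le_mul_of_nonneg_right hK1 hRabs
    nlinarith
  calc Z ^ γp - Z' ^ γp ≤ γp * Zm ^ (γp - 1) * (Z - Z') := hpow
    _ ≤ γp * Zm ^ (γp - 1) * (Zm ^ (1 - γ) / γ * (|R - R'| + |Q - Q'|)) :=
        mul_le_mul_of_nonneg_left hZsub (by positivity)
    _ = γp * Zm ^ (γp - 1) * (Zm ^ (1 - γ) / γ) * (|R - R'| + |Q - Q'|) := by ring

/-- Lipschitz continuity of the pressure `p(Z) = Z^{γ₊}` as a function of the two
densities on bounded sets: for `1 ≤ γ₊ ≤ γ₋`, `γ = γ₊/γ₋`, and `M > 0`, there is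
`C = C(M, γ₊, γ₋) > 0` such that
`|Z(R,Q)^{γ₊} − Z(R̃,Q̃)^{γ₊}| ≤ C (|R − R̃| + |Q − Q̃|)` whenever
`(R,Q), (R̃,Q̃) ∈ [0,M]²` with `R + Q > 0`, `R̃ + Q̃ > 0`. -/
theorem two_fluid_pressure_lipschitz
    (γp γm M : ℝ) (hγp : 1 ≤ γp) (hγpm : γp ≤ γm) (hM : 0 < M) :
    ∃ C : ℝ, 0 < C ∧
      ∀ R Q R' Q' Z Z' : ℝ,
        R ∈ Set.Icc 0 M → Q ∈ Set.Icc 0 M →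
        R' ∈ Set.Icc 0 M → Q' ∈ Set.Icc 0 M →
        0 < R + Q → 0 < R' + Q' →
        (R ≤ Z ∧ 0 < Z ∧ (1 - R / Z) * Z ^ (γp / γm) = Q) →
        (R' ≤ Z' ∧ 0 < Z' ∧ (1 - R' / Z') * Z' ^ (γp / γm) = Q') →
        |Z ^ γp - Z' ^ γp| ≤ C * (|R - R'| + |Q - Q'|) := by
  have hγm : (0:ℝ) < γm := lt_of_lt_of_le one_pos (hγp.trans hγpm)
  have hγ : 0 < γp / γm := div_pos (lt_of_lt_of_le one_pos hγp) hγm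
  have hγ1 : γp / γm ≤ 1 := div_le_one_of_le₀ hγpm hγm.le
  have hZmax1 : (1:ℝ) ≤ max 1 ((2 * M) ^ (1 / (γp / γm))) := le_max_left _ _
  have hZmax0 : (0:ℝ) < max 1 ((2 * M) ^ (1 / (γp / γm))) := lt_of_lt_of_le one_pos hZmax1
  have hγp0 : (0:ℝ) < γp := lt_of_lt_of_le one_pos hγp
  refine ⟨γp * (max 1 ((2 * M) ^ (1 / (γp / γm)))) ^ (γp - 1) *
      ((max 1 ((2 * M) ^ (1 / (γp / γm)))) ^ (1 - γp / γm) / (γp / γm)),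
    by positivity, ?_⟩
  intro R Q R' Q' Z Z' hR hQ hR' hQ' _ _ hZ hZ'
  rcases le_total Z' Z with h | h
  · have hm := two_fluid_main hγ hγ1 hγp hM hR hQ hR' hQ' hZ.2.1 hZ.2.2 hZ'.2.1 hZ'.2.2 h
    have habs : |Z ^ γp - Z' ^ γp| = Z ^ γp - Z' ^ γp := by
      rw [abs_of_nonneg]
      have := Real.rpow_le_rpow hZ'.2.1.le h (by linarith : (0:ℝ) ≤ γp)
      linarith
    rw [habs]; exact hm
  · have hm := two_fluid_main hγ hγ1 hγp hM hR' hQ' hR hQ hZ'.2.1 hZ'.2.2 hZ.2.1 hZ.2.2 h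
    have habs : |Z ^ γp - Z' ^ γp| = Z' ^ γp - Z ^ γp := by
      rw [abs_sub_comm, abs_of_nonneg]
      have := Real.rpow_le_rpow hZ.2.1.le h (by linarith : (0:ℝ) ≤ γp)
      linarith
    rw [habs, abs_sub_comm R R', abs_sub_comm Q Q']
    exact hm
end

section
/- Let γ₊ and γ₋ be real numbers with 1 ≤ γ₊ ≤ γ₋, set γ = γ₊/γ₋, and let M > 0. Let (X, μ) be a finite measure space and let R, Q, R̃, Q̃ : X → [0,M] be measurable functions with R(x) + Q(x) > 0 and R̃(x) + Q̃(x) > 0 for all x. Then there exists a constant C = C(M, γ₊, γ₋) > 0, independent of the functions, such that ‖ Z(R,Q)^{γ₊} − Z(R̃,Q̃)^{γ₊} ‖_{L²(μ)} ≤ C ( ‖ R − R̃ ‖_{L²(μ)} + ‖ Q − Q̃ ‖_{L²(μ)} ). -/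
open MeasureTheory Real

-- Bernoulli-type mean value bounds
private lemma bern_concave {a b p : ℝ} (ha : 0 < a) (hab : a ≤ b) (hp0 : 0 ≤ p) (hp1 : p ≤ 1) :
    b ^ p - a ^ p ≤ p * a ^ (p - 1) * (b - a) := by
  have hb : 0 < b := ha.trans_le hab
  have hs : (-1 : ℝ) ≤ b / a - 1 := by
    have : (1:ℝ) ≤ b / a := (one_le_div ha).2 hab
    linarith
  have h := rpow_one_add_le_one_add_mul_self hs hp0 hp1
  rw [add_sub_cancel] at h
  have hap : (0:ℝ) < a ^ p := rpow_pos_of_pos ha p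
  have hmul : (b / a) ^ p * a ^ p = b ^ p := by
    rw [← Real.mul_rpow (by positivity) ha.le, div_mul_cancel₀ _ ha.ne']
  have h2 := mul_le_mul_of_nonneg_right h hap.le
  rw [hmul] at h2
  rw [Real.rpow_sub_one ha.ne']
  have expand : (1 + p * (b / a - 1)) * a ^ p = a ^ p + p * (a ^ p / a) * (b - a) := by
    field_simp
  linarith

private lemma bern_convex {a b p : ℝ} (ha : 0 < a) (hab : a ≤ b) (hp : 1 ≤ p) :
    b ^ p - a ^ p ≤ p * b ^ (p - 1) * (b - a) := by
  have hb : 0 < b := ha.trans_le hab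
  have hs : (-1 : ℝ) ≤ a / b - 1 := by
    have : 0 < a / b := div_pos ha hb
    linarith
  have h := one_add_mul_self_le_rpow_one_add hs hp
  rw [add_sub_cancel] at h
  have hbp : (0:ℝ) < b ^ p := rpow_pos_of_pos hb p
  have hmul : (a / b) ^ p * b ^ p = a ^ p := by
    rw [← Real.mul_rpow (by positivity) hb.le, div_mul_cancel₀ _ hb.ne']
  have h2 := mul_le_mul_of_nonneg_right h hbp.le
  rw [hmul] at h2
  rw [Real.rpow_sub_one hb.ne']
  have expand : (1 + p * (a / b - 1)) * b ^ p = b ^ p - p * (b ^ p / b) * (b - a) := by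
    field_simp
    ring
  linarith

private lemma eqn_transform {γ r z q : ℝ} (hz : 0 < z)
    (heq : (1 - r / z) * z ^ γ = q) : z - r = q * z ^ (1 - γ) := by
  have h1 : z ^ γ * z ^ (1 - γ) = z := by
    rw [← Real.rpow_add hz]
    norm_num
  rw [← heq, mul_assoc, h1, sub_mul, one_mul, div_mul_cancel₀ _ hz.ne']

private lemma eqn_qz {γ r z q : ℝ} (hz : 0 < z)
    (heq : (1 - r / z) * z ^ γ = q) : q * z ^ (-γ) = 1 - r / z := by
  rw [← heq, mul_assoc, ← Real.rpow_add hz, add_neg_cancel, Real.rpow_zero, mul_one]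

private lemma z_bound {γ M r q z : ℝ} (hγ0 : 0 < γ) (hγ1 : γ ≤ 1) (hM : 0 < M)
    (hr0 : 0 ≤ r) (hrM : r ≤ M) (hqM : q ≤ M) (hz : 0 < z)
    (heq : z - r = q * z ^ (1 - γ)) : z ≤ max 1 ((2 * M) ^ (1 / γ)) := by
  rcases le_or_gt z 1 with h | h
  · exact h.trans (le_max_left _ _)
  · refine le_trans ?_ (le_max_right _ _)
    have h1 : z ^ (γ - 1) ≤ 1 :=
      Real.rpow_le_one_of_one_le_of_nonpos h.le (by linarith)
    have e1 : q * z ^ (1 - γ) * z ^ (γ - 1) = q := by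
      rw [mul_assoc, ← Real.rpow_add hz]
      norm_num
    have e2 : z * z ^ (γ - 1) = z ^ γ := by
      have h12 : z ^ (1 + (γ - 1)) = z ^ (1:ℝ) * z ^ (γ - 1) := Real.rpow_add hz 1 (γ - 1)
      rw [add_sub_cancel, Real.rpow_one] at h12
      exact h12.symm
    have h3 := congrArg (fun t => t * z ^ (γ - 1)) heq
    rw [e1, sub_mul, e2] at h3
    -- h3 : z ^ γ - r * z ^ (γ - 1) = q
    have hrz1 : r * z ^ (γ - 1) ≤ M * 1 :=
      mul_le_mul hrM h1 (Real.rpow_nonneg hz.le _) hM.le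
    have hzγ : z ^ γ ≤ 2 * M := by linarith
    have := Real.rpow_le_rpow (Real.rpow_nonneg hz.le γ) hzγ (by positivity : (0:ℝ) ≤ 1 / γ)
    rwa [one_div, Real.rpow_rpow_inv hz.le hγ0.ne', ← one_div] at this

private lemma diff_bound {γ M r q z r' q' z' : ℝ} (hγ0 : 0 < γ) (hγ1 : γ ≤ 1) (hM : 0 < M)
    (hr0 : 0 ≤ r) (hrM : r ≤ M) (hq0 : 0 ≤ q) (hqM : q ≤ M)
    (hr'0 : 0 ≤ r') (hq'0 : 0 ≤ q')
    (hz : 0 < z) (heq : (1 - r / z) * z ^ γ = q)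
    (hz' : 0 < z') (heq' : (1 - r' / z') * z' ^ γ = q')
    (hord : z' ≤ z) :
    γ * (z - z') ≤ |r - r'| + (max 1 ((2 * M) ^ (1 / γ))) ^ (1 - γ) * |q - q'| := by
  set B := max 1 ((2 * M) ^ (1 / γ)) with hB
  have hB1 : (1:ℝ) ≤ B := le_max_left _ _
  have hfix : z - r = q * z ^ (1 - γ) := eqn_transform hz heq
  have hfix' : z' - r' = q' * z' ^ (1 - γ) := eqn_transform hz' heq'
  have hzB : z ≤ B := z_bound hγ0 hγ1 hM hr0 hrM hqM hz hfix
  -- concavity bound on the third term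
  have hconc : z ^ (1 - γ) - z' ^ (1 - γ) ≤ (1 - γ) * z' ^ (-γ) * (z - z') := by
    have h0 : (0:ℝ) ≤ 1 - γ := by linarith
    have h1 : (1:ℝ) - γ ≤ 1 := by linarith
    have := bern_concave hz' hord h0 h1
    rwa [show (1 - γ) - 1 = -γ by ring] at this
  have hq'z : q' * z' ^ (-γ) = 1 - r' / z' := eqn_qz hz' heq'
  have hq'z1 : q' * z' ^ (-γ) ≤ 1 := by
    rw [hq'z]
    have : 0 ≤ r' / z' := div_nonneg hr'0 hz'.le
    linarith
  have hthird : q' * (z ^ (1 - γ) - z' ^ (1 - γ)) ≤ (1 - γ) * (z - z') := by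
    calc q' * (z ^ (1 - γ) - z' ^ (1 - γ))
        ≤ q' * ((1 - γ) * z' ^ (-γ) * (z - z')) := mul_le_mul_of_nonneg_left hconc hq'0
      _ = (1 - γ) * (q' * z' ^ (-γ)) * (z - z') := by ring
      _ ≤ (1 - γ) * 1 * (z - z') := by
          apply mul_le_mul_of_nonneg_right _ (by linarith)
          exact mul_le_mul_of_nonneg_left hq'z1 (by linarith)
      _ = (1 - γ) * (z - z') := by ring
  have hiden : q * z ^ (1 - γ) - q' * z' ^ (1 - γ)
      = (q - q') * z ^ (1 - γ) + q' * (z ^ (1 - γ) - z' ^ (1 - γ)) := by ring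
  have h1 : r - r' ≤ |r - r'| := le_abs_self _
  have hzpow : z ^ (1 - γ) ≤ B ^ (1 - γ) := Real.rpow_le_rpow hz.le hzB (by linarith)
  have h2 : (q - q') * z ^ (1 - γ) ≤ B ^ (1 - γ) * |q - q'| := by
    calc (q - q') * z ^ (1 - γ)
        ≤ |q - q'| * z ^ (1 - γ) :=
          mul_le_mul_of_nonneg_right (le_abs_self _) (Real.rpow_nonneg hz.le _)
      _ ≤ |q - q'| * B ^ (1 - γ) := mul_le_mul_of_nonneg_left hzpow (abs_nonneg _)
      _ = B ^ (1 - γ) * |q - q'| := mul_comm _ _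
  linarith

noncomputable def pressC (γp γm M : ℝ) : ℝ :=
  γp * (max 1 ((2 * M) ^ (1 / (γp / γm)))) ^ (γp - 1)
    * (max 1 ((2 * M) ^ (1 / (γp / γm)))) ^ (1 - γp / γm) / (γp / γm)

private lemma asym_pointwise (γp γm M : ℝ) (hγp : 1 ≤ γp) (hγpm : γp ≤ γm) (hM : 0 < M)
    {r q z r' q' z' : ℝ}
    (hr0 : 0 ≤ r) (hrM : r ≤ M) (hq0 : 0 ≤ q) (hqM : q ≤ M)
    (hr'0 : 0 ≤ r') (hr'M : r' ≤ M) (hq'0 : 0 ≤ q') (hq'M : q' ≤ M)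
    (hz : 0 < z) (heq : (1 - r / z) * z ^ (γp / γm) = q)
    (hz' : 0 < z') (heq' : (1 - r' / z') * z' ^ (γp / γm) = q')
    (hord : z' ≤ z) :
    z ^ γp - z' ^ γp ≤ pressC γp γm M * (|r - r'| + |q - q'|) := by
  have hγm : (1:ℝ) ≤ γm := hγp.trans hγpm
  set γ : ℝ := γp / γm with hγdef
  have hγ0 : 0 < γ := div_pos (by linarith) (by linarith)
  have hγ1 : γ ≤ 1 := div_le_one_of_le₀ hγpm (by linarith)
  set B : ℝ := max 1 ((2 * M) ^ (1 / γ)) with hBdef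
  have hB1 : (1:ℝ) ≤ B := le_max_left _ _
  have hB0 : 0 < B := lt_of_lt_of_le one_pos hB1
  have hzB : z ≤ B :=
    z_bound hγ0 hγ1 hM hr0 hrM hqM hz (eqn_transform hz heq)
  -- mean value for γp ≥ 1
  have hmv : z ^ γp - z' ^ γp ≤ γp * B ^ (γp - 1) * (z - z') := by
    have h := bern_convex hz' hord hγp
    have hzpow : z ^ (γp - 1) ≤ B ^ (γp - 1) := Real.rpow_le_rpow hz.le hzB (by linarith)
    have : γp * z ^ (γp - 1) * (z - z') ≤ γp * B ^ (γp - 1) * (z - z') := by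
      apply mul_le_mul_of_nonneg_right _ (by linarith)
      exact mul_le_mul_of_nonneg_left hzpow (by linarith)
    linarith
  have hdiff := diff_bound hγ0 hγ1 hM hr0 hrM hq0 hqM hr'0 hq'0 hz heq hz' heq' hord
  have hBexp1 : (1:ℝ) ≤ B ^ (1 - γ) := by
    calc (1:ℝ) = 1 ^ (1 - γ) := (Real.one_rpow _).symm
      _ ≤ B ^ (1 - γ) := Real.rpow_le_rpow (by norm_num) hB1 (by linarith)
  have hBe0 : 0 < B ^ (1 - γ) := by positivity
  have hBp0 : 0 < B ^ (γp - 1) := by positivity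
  have hzz : z - z' ≤ (1 / γ) * (B ^ (1 - γ) * (|r - r'| + |q - q'|)) := by
    have : γ * (z - z') ≤ B ^ (1 - γ) * (|r - r'| + |q - q'|) := by
      have habs : |r - r'| ≤ B ^ (1 - γ) * |r - r'| := by
        nlinarith [abs_nonneg (r - r')]
      nlinarith [abs_nonneg (q - q')]
    calc z - z' = (1 / γ) * (γ * (z - z')) := by field_simp
      _ ≤ (1 / γ) * (B ^ (1 - γ) * (|r - r'| + |q - q'|)) := by
          apply mul_le_mul_of_nonneg_left this (by positivity)
  calc z ^ γp - z' ^ γp ≤ γp * B ^ (γp - 1) * (z - z') := hmv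
    _ ≤ γp * B ^ (γp - 1) * ((1 / γ) * (B ^ (1 - γ) * (|r - r'| + |q - q'|))) := by
        apply mul_le_mul_of_nonneg_left hzz (by positivity)
    _ = pressC γp γm M * (|r - r'| + |q - q'|) := by
        rw [pressC, ← hγdef, ← hBdef]
        field_simp


/-- L² estimate on the pressure difference: for `1 ≤ γ₊ ≤ γ₋`, `γ = γ₊/γ₋`, `M > 0`
and a finite measure space `(X, μ)`, there is a constant `C = C(M, γ₊, γ₋) > 0`,
independent of the functions, such that for all measurable `R, Q, R̃, Q̃ : X → [0,M]`
with pointwise positive sums and associated pressure variables `Z, Z̃`,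
`‖Z^{γ₊} − Z̃^{γ₊}‖_{L²(μ)} ≤ C (‖R − R̃‖_{L²(μ)} + ‖Q − Q̃‖_{L²(μ)})`. -/
theorem two_fluid_pressure_L2_estimate
    (γp γm M : ℝ) (hγp : 1 ≤ γp) (hγpm : γp ≤ γm) (hM : 0 < M)
    {X : Type*} [MeasurableSpace X] (μ : Measure X) [IsFiniteMeasure μ] :
    ∃ C : ℝ, 0 < C ∧
      ∀ R Q R' Q' Z Z' : X → ℝ,
        Measurable R → Measurable Q → Measurable R' → Measurable Q' →
        (∀ x, R x ∈ Set.Icc 0 M) → (∀ x, Q x ∈ Set.Icc 0 M) →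
        (∀ x, R' x ∈ Set.Icc 0 M) → (∀ x, Q' x ∈ Set.Icc 0 M) →
        (∀ x, 0 < R x + Q x) → (∀ x, 0 < R' x + Q' x) →
        (∀ x, R x ≤ Z x ∧ 0 < Z x ∧ (1 - R x / Z x) * Z x ^ (γp / γm) = Q x) →
        (∀ x, R' x ≤ Z' x ∧ 0 < Z' x ∧ (1 - R' x / Z' x) * Z' x ^ (γp / γm) = Q' x) →
        eLpNorm (fun x => Z x ^ γp - Z' x ^ γp) 2 μ ≤
          ENNReal.ofReal C *
            (eLpNorm (fun x => R x - R' x) 2 μ + eLpNorm (fun x => Q x - Q' x) 2 μ) := by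
  have hγm : (1:ℝ) ≤ γm := hγp.trans hγpm
  have hγ0 : 0 < γp / γm := div_pos (by linarith) (by linarith)
  have hC0 : 0 < pressC γp γm M := by
    have hB1 : (1:ℝ) ≤ max 1 ((2 * M) ^ (1 / (γp / γm))) := le_max_left _ _
    have hB0 : (0:ℝ) < max 1 ((2 * M) ^ (1 / (γp / γm))) := lt_of_lt_of_le one_pos hB1
    rw [pressC]
    positivity
  refine ⟨pressC γp γm M, hC0, ?_⟩
  intro R Q R' Q' Z Z' hRm hQm hR'm hQ'm hRb hQb hR'b hQ'b _hRQ _hRQ' hZ hZ'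
  -- pointwise bound
  have hpt : ∀ x, |Z x ^ γp - Z' x ^ γp| ≤
      pressC γp γm M * (|R x - R' x| + |Q x - Q' x|) := by
    intro x
    obtain ⟨hrz, hz, heq⟩ := hZ x
    obtain ⟨hrz', hz', heq'⟩ := hZ' x
    rcases le_total (Z' x) (Z x) with hord | hord
    · rw [abs_of_nonneg (sub_nonneg.2 (Real.rpow_le_rpow hz'.le hord (by linarith)))]
      exact asym_pointwise γp γm M hγp hγpm hM (hRb x).1 (hRb x).2 (hQb x).1 (hQb x).2
        (hR'b x).1 (hR'b x).2 (hQ'b x).1 (hQ'b x).2 hz heq hz' heq' hord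
    · rw [abs_of_nonpos (sub_nonpos.2 (Real.rpow_le_rpow hz.le hord (by linarith))),
        neg_sub]
      have := asym_pointwise γp γm M hγp hγpm hM (hR'b x).1 (hR'b x).2 (hQ'b x).1 (hQ'b x).2
        (hRb x).1 (hRb x).2 (hQb x).1 (hQb x).2 hz' heq' hz heq hord
      rwa [abs_sub_comm (R' x) (R x), abs_sub_comm (Q' x) (Q x)] at this
  -- L² estimates
  have step1 : eLpNorm (fun x => Z x ^ γp - Z' x ^ γp) 2 μ ≤
      eLpNorm (fun x => pressC γp γm M * (|R x - R' x| + |Q x - Q' x|)) 2 μ := by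
    apply eLpNorm_mono
    intro x
    rw [Real.norm_eq_abs, Real.norm_eq_abs]
    exact (hpt x).trans (le_abs_self _)
  have step2 : eLpNorm (fun x => pressC γp γm M * (|R x - R' x| + |Q x - Q' x|)) 2 μ =
      (‖pressC γp γm M‖₊ : ENNReal) *
        eLpNorm (fun x => |R x - R' x| + |Q x - Q' x|) 2 μ := by
    have hfun : (fun x => pressC γp γm M * (|R x - R' x| + |Q x - Q' x|)) =
        (pressC γp γm M) • (fun x => |R x - R' x| + |Q x - Q' x|) := rfl
    rw [hfun]
    exact eLpNorm_const_smul _ _ _ _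
  have habsR : eLpNorm (fun x => |R x - R' x|) 2 μ = eLpNorm (fun x => R x - R' x) 2 μ := by
    simpa [Real.norm_eq_abs] using eLpNorm_norm (fun x => R x - R' x) (p := 2) (μ := μ)
  have habsQ : eLpNorm (fun x => |Q x - Q' x|) 2 μ = eLpNorm (fun x => Q x - Q' x) 2 μ := by
    simpa [Real.norm_eq_abs] using eLpNorm_norm (fun x => Q x - Q' x) (p := 2) (μ := μ)
  have step3 : eLpNorm (fun x => |R x - R' x| + |Q x - Q' x|) 2 μ ≤
      eLpNorm (fun x => R x - R' x) 2 μ + eLpNorm (fun x => Q x - Q' x) 2 μ := by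
    refine le_trans (eLpNorm_add_le ?_ ?_ one_le_two) ?_
    · exact ((hRm.sub hR'm).abs).aestronglyMeasurable
    · exact ((hQm.sub hQ'm).abs).aestronglyMeasurable
    · rw [habsR, habsQ]
  have hnorm : (‖pressC γp γm M‖₊ : ENNReal) = ENNReal.ofReal (pressC γp γm M) := by
    rw [← enorm_eq_nnnorm, ← ofReal_norm, Real.norm_eq_abs, abs_of_pos hC0]
  calc eLpNorm (fun x => Z x ^ γp - Z' x ^ γp) 2 μ
      ≤ eLpNorm (fun x => pressC γp γm M * (|R x - R' x| + |Q x - Q' x|)) 2 μ := step1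
    _ = (‖pressC γp γm M‖₊ : ENNReal) *
        eLpNorm (fun x => |R x - R' x| + |Q x - Q' x|) 2 μ := step2
    _ ≤ (‖pressC γp γm M‖₊ : ENNReal) *
        (eLpNorm (fun x => R x - R' x) 2 μ + eLpNorm (fun x => Q x - Q' x) 2 μ) :=
        mul_le_mul_right step3 _
    _ = ENNReal.ofReal (pressC γp γm M) *
        (eLpNorm (fun x => R x - R' x) 2 μ + eLpNorm (fun x => Q x - Q' x) 2 μ) := by
        rw [hnorm]
end

section
/- Let (X, μ) be a probability space. Let R, Q, R̃, Q̃ : X → ℝ be nonnegative integrable functions with R, Q essentially bounded, and let u, ũ : X → ℝ³ be such that u, ũ, (R+Q)u, (R̃+Q̃)ũ are integrable and ũ − ∫_X ũ dμ, u − ∫_X u dμ, R − R̃, Q − Q̃ are in L². Set m = ∫_X (R+Q) dμ and assume m > 0. Assume ∫_X (R − R̃) dμ = 0, ∫_X (Q − Q̃) dμ = 0, and ∫_X (R+Q) u dμ = ∫_X (R̃+Q̃) ũ dμ. Then, writing U = u − ũ, one has | ∫_X U dμ | ≤ (1/m) [ ( ‖R‖_{L^∞} + ‖Q‖_{L^∞}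 ) ‖ U − ∫_X U dμ ‖_{L²(μ)} + ( ‖ R − R̃ ‖_{L²(μ)} + ‖ Q − Q̃ ‖_{L²(μ)} ) ‖ ũ − ∫_X ũ dμ ‖_{L²(μ)} ]. -/
open MeasureTheory

/-- Mean-value estimate for the velocity difference (Lemma 2.3 of the paper): on a
probability space, under conservation of total mass and momentum,
`|∫ U dμ| ≤ (1/m) [ (‖R‖_∞ + ‖Q‖_∞) ‖U − ∫U‖_{L²} + (‖R−R̃‖_{L²} + ‖Q−Q̃‖_{L²}) ‖ũ − ∫ũ‖_{L²} ]`,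
where `U = u − ũ` and `m = ∫ (R+Q) dμ > 0`. -/
theorem velocity_mean_estimate
    {X : Type*} [MeasurableSpace X] (μ : Measure X) [IsProbabilityMeasure μ]
    (R Q R' Q' : X → ℝ) (u u' : X → EuclideanSpace ℝ (Fin 3))
    (hRpos : ∀ x, 0 ≤ R x) (hQpos : ∀ x, 0 ≤ Q x)
    (hR'pos : ∀ x, 0 ≤ R' x) (hQ'pos : ∀ x, 0 ≤ Q' x)
    (hR : Integrable R μ) (hQ : Integrable Q μ)
    (hR' : Integrable R' μ) (hQ' : Integrable Q' μ)
    (hRbdd : MemLp R ⊤ μ) (hQbdd : MemLp Q ⊤ μ)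
    (hu : Integrable u μ) (hu' : Integrable u' μ)
    (hRQu : Integrable (fun x => (R x + Q x) • u x) μ)
    (hR'Q'u' : Integrable (fun x => (R' x + Q' x) • u' x) μ)
    (hu'osc : MemLp (fun x => u' x - ∫ y, u' y ∂μ) 2 μ)
    (huosc : MemLp (fun x => u x - ∫ y, u y ∂μ) 2 μ)
    (hRdiff : MemLp (fun x => R x - R' x) 2 μ)
    (hQdiff : MemLp (fun x => Q x - Q' x) 2 μ)
    (m : ℝ) (hm : m = ∫ x, (R x + Q x) ∂μ) (hmpos : 0 < m)
    (hmassR : ∫ x, (R x - R' x) ∂μ = 0)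
    (hmassQ : ∫ x, (Q x - Q' x) ∂μ = 0)
    (hmom : ∫ x, (R x + Q x) • u x ∂μ = ∫ x, (R' x + Q' x) • u' x ∂μ) :
    ‖∫ x, (u x - u' x) ∂μ‖ ≤
      (1 / m) *
        (((eLpNorm R ⊤ μ).toReal + (eLpNorm Q ⊤ μ).toReal) *
            (eLpNorm (fun x => (u x - u' x) - ∫ y, (u y - u' y) ∂μ) 2 μ).toReal +
          ((eLpNorm (fun x => R x - R' x) 2 μ).toReal +
              (eLpNorm (fun x => Q x - Q' x) 2 μ).toReal) *
            (eLpNorm (fun x => u' x - ∫ y, u' y ∂μ) 2 μ).toReal) := by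
  set A : EuclideanSpace ℝ (Fin 3) := ∫ x, (u x - u' x) ∂μ with hA
  set w : X → EuclideanSpace ℝ (Fin 3) := fun x => (u x - u' x) - A with hw
  set v : X → EuclideanSpace ℝ (Fin 3) := fun x => u' x - ∫ y, u' y ∂μ with hv
  set g : X → ℝ := fun x => (R x - R' x) + (Q x - Q' x) with hg
  have h11 : (1 : ENNReal) / 1 = 1 / 2 + 1 / 2 := by
    rw [ENNReal.div_add_div_same, one_div_one, one_add_one_eq_two,
      ENNReal.div_self (by norm_num) ENNReal.ofNat_ne_top]
  have hAval : A = (∫ y, u y ∂μ) - ∫ y, u' y ∂μ := by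
    rw [hA]; exact integral_sub hu hu'
  -- basic integrability / MemLp facts
  have hRQtop : MemLp (fun x => R x + Q x) ⊤ μ := hRbdd.add hQbdd
  have hw2 : MemLp w 2 μ := by
    have h := huosc.sub hu'osc
    have : w = fun x => (u x - ∫ y, u y ∂μ) - (u' x - ∫ y, u' y ∂μ) := by
      funext x; simp only [hw, hAval]; abel
    rw [this]; exact h
  have hv2 : MemLp v 2 μ := hu'osc
  have hg2 : MemLp g 2 μ := hRdiff.add hQdiff
  have hRR' : Integrable (fun x => R x - R' x) μ := hR.sub hR'
  have hQQ' : Integrable (fun x => Q x - Q' x) μ := hQ.sub hQ'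
  have hg_int : Integrable g μ := hRR'.add hQQ'
  have hgzero : ∫ x, g x ∂μ = 0 := by
    simp only [hg]
    rw [integral_add hRR' hQQ', hmassR, hmassQ, add_zero]
  have hRQw : Integrable (fun x => (R x + Q x) • w x) μ := by
    have h : MemLp ((fun x => R x + Q x) • w) 2 μ := hw2.smul hRQtop
    exact (h.integrable (by norm_num)).congr (Filter.Eventually.of_forall fun x => rfl)
  have hgv : Integrable (fun x => g x • v x) μ := by
    have h : MemLp (g • v) 1 μ :=
      hv2.smul hg2
    exact (memLp_one_iff_integrable.mp h).congr (Filter.Eventually.of_forall fun x => rfl)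
  have hRQu' : Integrable (fun x => (R x + Q x) • u' x) μ :=
    (hu'.smul_of_top_right hRQtop).congr (Filter.Eventually.of_forall fun x => rfl)
  have hRQU : Integrable (fun x => (R x + Q x) • (u x - u' x)) μ := by
    have h := hRQu.sub hRQu'
    refine h.congr (Filter.Eventually.of_forall fun x => ?_)
    simp [smul_sub]
  have hRQA : Integrable (fun x => (R x + Q x) • A) μ := (hR.add hQ).smul_const A
  have hgu' : Integrable (fun x => g x • u' x) μ := by
    have h := hgv.add (hg_int.smul_const (∫ y, u' y ∂μ))
    refine h.congr (Filter.Eventually.of_forall fun x => ?_)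
    simp only [hv, Pi.add_apply, smul_sub, sub_add_cancel]
  -- the key identity
  have E1 : ∫ x, (R x + Q x) • w x ∂μ
      = (∫ x, (R x + Q x) • (u x - u' x) ∂μ) - m • A := by
    have : (fun x => (R x + Q x) • w x)
        = fun x => (R x + Q x) • (u x - u' x) - (R x + Q x) • A := by
      funext x; rw [hw, smul_sub]
    rw [this, integral_sub hRQU hRQA, integral_smul_const, hm]
  have E2 : ∫ x, (R x + Q x) • (u x - u' x) ∂μ = - ∫ x, g x • u' x ∂μ := by
    have h1 : ∫ x, (R x + Q x) • (u x - u' x) ∂μ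
        = (∫ x, (R x + Q x) • u x ∂μ) - ∫ x, (R x + Q x) • u' x ∂μ := by
      have : (fun x => (R x + Q x) • (u x - u' x))
          = fun x => (R x + Q x) • u x - (R x + Q x) • u' x := by
        funext x; rw [smul_sub]
      rw [this, integral_sub hRQu hRQu']
    rw [h1, hmom, ← integral_sub hR'Q'u' hRQu']
    rw [← integral_neg]
    congr 1
    funext x
    have : (R' x + Q' x) • u' x - (R x + Q x) • u' x = ((R' x + Q' x) - (R x + Q x)) • u' x := by
      rw [sub_smul]
    rw [this]
    have : (R' x + Q' x) - (R x + Q x) = -(g x) := by simp [hg]; ring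
    rw [this, neg_smul]
  have E3 : ∫ x, g x • u' x ∂μ = ∫ x, g x • v x ∂μ := by
    have h : (fun x => g x • u' x)
        = fun x => g x • v x + g x • (∫ y, u' y ∂μ) := by
      funext x; simp only [hv, smul_sub]; abel
    rw [h, integral_add hgv (hg_int.smul_const _), integral_smul_const, hgzero, zero_smul,
      add_zero]
  have key : m • A = -((∫ x, (R x + Q x) • w x ∂μ) + ∫ x, g x • v x ∂μ) := by
    rw [E1, E2, E3]; abel
  -- norm estimates
  have norm_int_le : ∀ (f : X → EuclideanSpace ℝ (Fin 3)), Integrable f μ →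
      ‖∫ x, f x ∂μ‖ ≤ (eLpNorm f 1 μ).toReal := by
    intro f hf
    calc ‖∫ x, f x ∂μ‖ ≤ ∫ x, ‖f x‖ ∂μ := norm_integral_le_integral_norm f
      _ = (eLpNorm f 1 μ).toReal := by
        rw [eLpNorm_one_eq_lintegral_enorm, ← ofReal_integral_norm_eq_lintegral_enorm hf,
          ENNReal.toReal_ofReal (integral_nonneg fun x => norm_nonneg _)]
  -- bound term 1
  have B1 : ‖∫ x, (R x + Q x) • w x ∂μ‖
      ≤ ((eLpNorm R ⊤ μ).toReal + (eLpNorm Q ⊤ μ).toReal) * (eLpNorm w 2 μ).toReal := by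
    refine (norm_int_le _ hRQw).trans ?_
    have h1 : eLpNorm (fun x => (R x + Q x) • w x) 1 μ
        ≤ eLpNorm (fun x => (R x + Q x) • w x) 2 μ :=
      eLpNorm_le_eLpNorm_of_exponent_le (by norm_num) (hRQtop.1.smul hw2.1)
    have h2 : eLpNorm (fun x => (R x + Q x) • w x) 2 μ
        ≤ eLpNorm (fun x => R x + Q x) ⊤ μ * eLpNorm w 2 μ :=
      eLpNorm_smul_le_eLpNorm_top_mul_eLpNorm 2 hw2.1 (fun x => R x + Q x)
    have h3 : eLpNorm (fun x => R x + Q x) ⊤ μ ≤ eLpNorm R ⊤ μ + eLpNorm Q ⊤ μ :=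
      eLpNorm_add_le hRbdd.1 hQbdd.1 le_top
    have h := h1.trans (h2.trans (mul_le_mul_left h3 _))
    have hfin : (eLpNorm R ⊤ μ + eLpNorm Q ⊤ μ) * eLpNorm w 2 μ ≠ ⊤ :=
      ENNReal.mul_ne_top (ENNReal.add_ne_top.mpr ⟨hRbdd.2.ne, hQbdd.2.ne⟩) hw2.2.ne
    calc (eLpNorm (fun x => (R x + Q x) • w x) 1 μ).toReal
        ≤ ((eLpNorm R ⊤ μ + eLpNorm Q ⊤ μ) * eLpNorm w 2 μ).toReal :=
          ENNReal.toReal_mono hfin h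
      _ = ((eLpNorm R ⊤ μ).toReal + (eLpNorm Q ⊤ μ).toReal) * (eLpNorm w 2 μ).toReal := by
          rw [ENNReal.toReal_mul, ENNReal.toReal_add hRbdd.2.ne hQbdd.2.ne]
  -- bound term 2
  have B2 : ‖∫ x, g x • v x ∂μ‖
      ≤ ((eLpNorm (fun x => R x - R' x) 2 μ).toReal +
          (eLpNorm (fun x => Q x - Q' x) 2 μ).toReal) * (eLpNorm v 2 μ).toReal := by
    refine (norm_int_le _ hgv).trans ?_
    have h2 : eLpNorm (fun x => g x • v x) 1 μ ≤ eLpNorm g 2 μ * eLpNorm v 2 μ :=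
      (eLpNorm_smul_le_mul_eLpNorm hv2.1 hg2.1 :
        eLpNorm (g • v) 1 μ ≤ _)
    have h3 : eLpNorm g 2 μ
        ≤ eLpNorm (fun x => R x - R' x) 2 μ + eLpNorm (fun x => Q x - Q' x) 2 μ :=
      eLpNorm_add_le hRdiff.1 hQdiff.1 (by norm_num)
    have h := h2.trans (mul_le_mul_left h3 _)
    have hfin : (eLpNorm (fun x => R x - R' x) 2 μ + eLpNorm (fun x => Q x - Q' x) 2 μ)
        * eLpNorm v 2 μ ≠ ⊤ :=
      ENNReal.mul_ne_top (ENNReal.add_ne_top.mpr ⟨hRdiff.2.ne, hQdiff.2.ne⟩) hv2.2.ne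
    calc (eLpNorm (fun x => g x • v x) 1 μ).toReal
        ≤ ((eLpNorm (fun x => R x - R' x) 2 μ + eLpNorm (fun x => Q x - Q' x) 2 μ)
            * eLpNorm v 2 μ).toReal := ENNReal.toReal_mono hfin h
      _ = _ := by
          rw [ENNReal.toReal_mul, ENNReal.toReal_add hRdiff.2.ne hQdiff.2.ne]
  -- combine
  have main : m * ‖A‖
      ≤ ((eLpNorm R ⊤ μ).toReal + (eLpNorm Q ⊤ μ).toReal) * (eLpNorm w 2 μ).toReal +
        ((eLpNorm (fun x => R x - R' x) 2 μ).toReal +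
          (eLpNorm (fun x => Q x - Q' x) 2 μ).toReal) * (eLpNorm v 2 μ).toReal := by
    have : m * ‖A‖ = ‖m • A‖ := by
      rw [norm_smul, Real.norm_eq_abs, abs_of_pos hmpos]
    rw [this, key, norm_neg]
    exact (norm_add_le _ _).trans (add_le_add B1 B2)
  calc ‖A‖ = (1 / m) * (m * ‖A‖) := by field_simp
    _ ≤ _ := by
        apply mul_le_mul_of_nonneg_left main (by positivity)
end
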